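/- For any v ∈ (0, 1/2] and any x ≥ 0, √(1−v)·φ⁺(x) ≤ (φ_v * φ⁺_{1−v})(x) ≤ √(1−v)·φ⁺(x) + √v·e^{−x²/(2v)}, where φ_v is the centered Gaussian density of variance v, φ⁺_w(x) = (x/w) e^{−x²/(2w)} 1_{x≥0} is the Rayleigh density with parameter √w, and φ⁺ = φ⁺_1. -/

import Mathlib

open MeasureTheory

/-- Centered Gaussian density of variance `v`. -/
noncomputable def gaussDens (v x : ℝ) : ℝ :=
  (Real.sqrt (2 * Real.pi * v))⁻¹ * Real.exp (-(x ^ 2) / (2 * v))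

/-- Rayleigh density with scale parameter `√w`: `φ⁺_w(x) = (x/w) e^{-x²/(2w)} 1_{x ≥ 0}`. -/
noncomputable def rayleighDens (w x : ℝ) : ℝ :=
  if 0 ≤ x then (x / w) * Real.exp (-(x ^ 2) / (2 * w)) else 0

open Real Set Filter

lemma gs_int (b μ : ℝ) (hb : 0 < b) :
    Integrable (fun s : ℝ => Real.exp (-b * (s - μ) ^ 2)) :=
  (integrable_exp_neg_mul_sq hb).comp_sub_right μ

lemma gsm_int (b μ : ℝ) (hb : 0 < b) :
    Integrable (fun s : ℝ => (s - μ) * Real.exp (-b * (s - μ) ^ 2)) :=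
  (integrable_mul_exp_neg_mul_sq hb).comp_sub_right μ

lemma gs_full (b μ : ℝ) (hb : 0 < b) :
    (∫ s : ℝ, Real.exp (-b * (s - μ) ^ 2)) = Real.sqrt (π / b) := by
  rw [integral_sub_right_eq_self (fun t : ℝ => Real.exp (-b * t ^ 2)) μ]
  exact integral_gaussian b

lemma deriv_aux (b μ s : ℝ) :
    HasDerivAt (fun s : ℝ => Real.exp (-b * (s - μ) ^ 2))
      (Real.exp (-b * (s - μ) ^ 2) * (-b * (2 * (s - μ)))) s := by
  have h1 : HasDerivAt (fun s : ℝ => -b * (s - μ) ^ 2) (-b * (2 * (s - μ))) s := by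
    have := (((hasDerivAt_id s).sub_const μ).pow 2).const_mul (-b)
    simpa [mul_comm, mul_assoc, mul_left_comm] using this
  exact h1.exp

lemma sq_tends_atTop (μ : ℝ) : Tendsto (fun s : ℝ => (s - μ) ^ 2) atTop atTop := by
  have := (tendsto_pow_atTop (two_ne_zero)).comp
    (tendsto_atTop_add_const_right atTop (-μ) tendsto_id)
  exact this.congr (fun s => by simp only [Function.comp_apply, id_eq]; ring)

lemma sq_tends_atBot (μ : ℝ) : Tendsto (fun s : ℝ => (s - μ) ^ 2) atBot atTop := by
  have h3 : Tendsto (fun s : ℝ => s - μ) atBot atBot :=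
    tendsto_atBot_add_const_right atBot (-μ) (by exact (tendsto_id : Tendsto (fun s : ℝ => s) atBot atBot))
  have := (tendsto_pow_atTop (two_ne_zero)).comp (tendsto_neg_atBot_atTop.comp h3)
  exact this.congr (fun s => by simp only [Function.comp_apply]; ring)

lemma exp_tends (b μ : ℝ) (hb : 0 < b) (l : Filter ℝ)
    (h2 : Tendsto (fun s : ℝ => (s - μ) ^ 2) l atTop) :
    Tendsto (fun s : ℝ => Real.exp (-b * (s - μ) ^ 2)) l (nhds 0) := by
  have h1 : Tendsto (fun s : ℝ => -b * (s - μ) ^ 2) l atBot := by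
    have := tendsto_neg_atTop_atBot.comp (h2.const_mul_atTop hb)
    exact this.congr (fun s => by simp only [Function.comp_apply]; ring)
  exact (Real.tendsto_exp_atBot.comp h1).congr (fun s => by simp only [Function.comp_apply])

lemma momentA (b μ : ℝ) (hb : 0 < b) :
    (∫ s in Ioi (0:ℝ), (s - μ) * Real.exp (-b * (s - μ) ^ 2))
      = Real.exp (-b * μ ^ 2) / (2 * b) := by
  have tends : Tendsto (fun s : ℝ => -(Real.exp (-b * (s - μ) ^ 2)) / (2 * b)) atTop (nhds 0) := by
    simpa using ((exp_tends b μ hb atTop (sq_tends_atTop μ)).neg.div_const (2 * b))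
  have hderiv : ∀ s ∈ Ioi (0:ℝ),
      HasDerivAt (fun s : ℝ => -(Real.exp (-b * (s - μ) ^ 2)) / (2 * b))
        ((s - μ) * Real.exp (-b * (s - μ) ^ 2)) s := by
    intro s _
    have h := ((deriv_aux b μ s).neg).div_const (2 * b)
    have hb' : (2 : ℝ) * b ≠ 0 := by positivity
    have : -(Real.exp (-b * (s - μ) ^ 2) * (-b * (2 * (s - μ)))) / (2 * b)
        = (s - μ) * Real.exp (-b * (s - μ) ^ 2) := by
      field_simp
    rwa [this] at h
  have key := integral_Ioi_of_hasDerivAt_of_tendsto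
    ((by fun_prop : Continuous fun s : ℝ => -(Real.exp (-b * (s - μ) ^ 2)) / (2 * b)).continuousWithinAt)
    hderiv ((gsm_int b μ hb).integrableOn) tends
  rw [key]
  ring_nf

lemma momentB (b μ : ℝ) (hb : 0 < b) :
    (∫ s in Iic (0:ℝ), (μ - s) * Real.exp (-b * (s - μ) ^ 2))
      = Real.exp (-b * μ ^ 2) / (2 * b) := by
  have tends : Tendsto (fun s : ℝ => Real.exp (-b * (s - μ) ^ 2) / (2 * b)) atBot (nhds 0) := by
    simpa using ((exp_tends b μ hb atBot (sq_tends_atBot μ)).div_const (2 * b))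
  have hderiv : ∀ s ∈ Iio (0:ℝ),
      HasDerivAt (fun s : ℝ => Real.exp (-b * (s - μ) ^ 2) / (2 * b))
        ((μ - s) * Real.exp (-b * (s - μ) ^ 2)) s := by
    intro s _
    have h := (deriv_aux b μ s).div_const (2 * b)
    have hb' : (2 : ℝ) * b ≠ 0 := by positivity
    have : Real.exp (-b * (s - μ) ^ 2) * (-b * (2 * (s - μ))) / (2 * b)
        = (μ - s) * Real.exp (-b * (s - μ) ^ 2) := by
      field_simp; ring
    rwa [this] at h
  have hint : IntegrableOn (fun s : ℝ => (μ - s) * Real.exp (-b * (s - μ) ^ 2)) (Iic (0:ℝ)) := by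
    have h2 : Integrable (fun s : ℝ => (μ - s) * Real.exp (-b * (s - μ) ^ 2)) := by
      have := (gsm_int b μ hb).neg
      exact this.congr (Filter.EventuallyEq.of_eq (funext fun s => by simp; ring))
    exact h2.integrableOn
  have key := integral_Iic_of_hasDerivAt_of_tendsto
    ((by fun_prop : Continuous fun s : ℝ => Real.exp (-b * (s - μ) ^ 2) / (2 * b)).continuousWithinAt)
    hderiv hint tends
  rw [key]
  ring_nf

lemma gsm_int' (b μ : ℝ) (hb : 0 < b) :
    Integrable (fun s : ℝ => (μ - s) * Real.exp (-b * (s - μ) ^ 2)) := by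
  have := (gsm_int b μ hb).neg
  exact this.congr (Filter.EventuallyEq.of_eq (funext fun s => by simp; ring))

lemma tail_bound (b μ : ℝ) (hb : 0 < b) (hμ : 0 ≤ μ) :
    μ * ∫ s in Iio (0:ℝ), Real.exp (-b * (s - μ) ^ 2)
      ≤ Real.exp (-b * μ ^ 2) / (2 * b) := by
  rw [← integral_const_mul μ _]
  have mono : (∫ s in Iio (0:ℝ), μ * Real.exp (-b * (s - μ) ^ 2))
      ≤ ∫ s in Iio (0:ℝ), (μ - s) * Real.exp (-b * (s - μ) ^ 2) := by
    apply setIntegral_mono_on ((gs_int b μ hb).const_mul μ).integrableOn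
      (gsm_int' b μ hb).integrableOn measurableSet_Iio
    intro s hs
    have h1 : μ ≤ μ - s := by have : s < 0 := hs; linarith
    exact mul_le_mul_of_nonneg_right h1 (Real.exp_pos _).le
  calc (∫ s in Iio (0:ℝ), μ * Real.exp (-b * (s - μ) ^ 2))
      ≤ ∫ s in Iio (0:ℝ), (μ - s) * Real.exp (-b * (s - μ) ^ 2) := mono
    _ = ∫ s in Iic (0:ℝ), (μ - s) * Real.exp (-b * (s - μ) ^ 2) :=
        (integral_Iic_eq_integral_Iio).symm
    _ = Real.exp (-b * μ ^ 2) / (2 * b) := momentB b μ hb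

lemma J_bounds (b μ : ℝ) (hb : 0 < b) (hμ : 0 ≤ μ) :
    μ * Real.sqrt (π / b) ≤ (∫ s in Ioi (0:ℝ), s * Real.exp (-b * (s - μ) ^ 2)) ∧
      (∫ s in Ioi (0:ℝ), s * Real.exp (-b * (s - μ) ^ 2))
        ≤ Real.exp (-b * μ ^ 2) / (2 * b) + μ * Real.sqrt (π / b) := by
  set K := ∫ s in Ioi (0:ℝ), Real.exp (-b * (s - μ) ^ 2) with hK
  have hJ : (∫ s in Ioi (0:ℝ), s * Real.exp (-b * (s - μ) ^ 2))
      = Real.exp (-b * μ ^ 2) / (2 * b) + μ * K := by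
    have hfun : (fun s : ℝ => s * Real.exp (-b * (s - μ) ^ 2))
        = fun s : ℝ => (s - μ) * Real.exp (-b * (s - μ) ^ 2)
            + μ * Real.exp (-b * (s - μ) ^ 2) := funext fun s => by ring
    rw [hfun, integral_add (gsm_int b μ hb).integrableOn
      ((gs_int b μ hb).const_mul μ).integrableOn, momentA b μ hb, integral_const_mul]
  have hsplit : Real.sqrt (π / b)
      = (∫ s in Iio (0:ℝ), Real.exp (-b * (s - μ) ^ 2)) + K := by
    rw [hK, ← integral_Ici_eq_integral_Ioi, ← gs_full b μ hb]
    exact (intervalIntegral.integral_Iio_add_Ici (gs_int b μ hb).integrableOn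
      (gs_int b μ hb).integrableOn).symm
  have hKupper : K ≤ Real.sqrt (π / b) := by
    rw [← gs_full b μ hb]
    exact setIntegral_le_integral (gs_int b μ hb)
      (Filter.Eventually.of_forall fun s => (Real.exp_pos _).le)
  have htail := tail_bound b μ hb hμ
  constructor
  · rw [hJ]
    have : μ * Real.sqrt (π / b)
        = μ * (∫ s in Iio (0:ℝ), Real.exp (-b * (s - μ) ^ 2)) + μ * K := by
      rw [hsplit]; ring
    nlinarith
  · rw [hJ]
    nlinarith

/-- For `v ∈ (0, 1/2]` and `x ≥ 0`,
`√(1-v) φ⁺(x) ≤ (φ_v * φ⁺_{1-v})(x) ≤ √(1-v) φ⁺(x) + √v e^{-x²/(2v)}`. -/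
theorem statement10 (v : ℝ) (hv : 0 < v) (hv2 : v ≤ 1 / 2) (x : ℝ) (hx : 0 ≤ x) :
    Real.sqrt (1 - v) * rayleighDens 1 x ≤
        (∫ s : ℝ, gaussDens v (x - s) * rayleighDens (1 - v) s) ∧
      (∫ s : ℝ, gaussDens v (x - s) * rayleighDens (1 - v) s) ≤
        Real.sqrt (1 - v) * rayleighDens 1 x + Real.sqrt v * Real.exp (-(x ^ 2) / (2 * v)) := by
  have hw : (0:ℝ) < 1 - v := by linarith
  have hvne : v ≠ 0 := ne_of_gt hv
  have hwne : (1:ℝ) - v ≠ 0 := ne_of_gt hw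
  set b : ℝ := (2 * (v * (1 - v)))⁻¹ with hb_def
  have hb : 0 < b := by rw [hb_def]; positivity
  set μ : ℝ := x * (1 - v) with hμ_def
  have hμ : 0 ≤ μ := by positivity
  set C : ℝ := (Real.sqrt (2 * π * v))⁻¹ / (1 - v) * Real.exp (-(x ^ 2) / 2) with hC_def
  have hsqrt_pos : 0 < Real.sqrt (2 * π * v) := Real.sqrt_pos.2 (by positivity)
  have hC : 0 ≤ C := by rw [hC_def]; positivity
  -- rewrite the integral
  have hrw : (∫ s : ℝ, gaussDens v (x - s) * rayleighDens (1 - v) s)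
      = C * ∫ s in Ioi (0:ℝ), s * Real.exp (-b * (s - μ) ^ 2) := by
    have h1 : (fun s : ℝ => gaussDens v (x - s) * rayleighDens (1 - v) s)
        = Set.indicator (Ici (0:ℝ)) (fun s => C * (s * Real.exp (-b * (s - μ) ^ 2))) := by
      funext s
      by_cases hs : 0 ≤ s
      · rw [Set.indicator_of_mem (mem_Ici.2 hs)]
        rw [gaussDens, rayleighDens, if_pos hs]
        have hexp : Real.exp (-((x - s) ^ 2) / (2 * v)) * Real.exp (-(s ^ 2) / (2 * (1 - v)))
            = Real.exp (-(x ^ 2) / 2) * Real.exp (-b * (s - μ) ^ 2) := by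
          rw [← Real.exp_add, ← Real.exp_add]
          congr 1
          rw [hb_def, hμ_def]
          field_simp
          ring
        calc (Real.sqrt (2 * π * v))⁻¹ * Real.exp (-((x - s) ^ 2) / (2 * v))
              * (s / (1 - v) * Real.exp (-(s ^ 2) / (2 * (1 - v))))
            = (Real.sqrt (2 * π * v))⁻¹ * (s / (1 - v))
              * (Real.exp (-((x - s) ^ 2) / (2 * v)) * Real.exp (-(s ^ 2) / (2 * (1 - v)))) := by
              ring
          _ = (Real.sqrt (2 * π * v))⁻¹ * (s / (1 - v))
              * (Real.exp (-(x ^ 2) / 2) * Real.exp (-b * (s - μ) ^ 2)) := by rw [hexp]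
          _ = C * (s * Real.exp (-b * (s - μ) ^ 2)) := by rw [hC_def]; ring
      · rw [Set.indicator_of_notMem (by simpa using hs)]
        rw [rayleighDens, if_neg hs, mul_zero]
    rw [h1, integral_indicator measurableSet_Ici, integral_Ici_eq_integral_Ioi,
      integral_const_mul]
  -- key algebraic identities
  have hsq : Real.sqrt (π / b) = Real.sqrt (2 * π * v) * Real.sqrt (1 - v) := by
    have : π / b = (2 * π * v) * (1 - v) := by
      rw [hb_def]
      field_simp
    rw [this, Real.sqrt_mul (by positivity)]
  have hray : rayleighDens 1 x = x * Real.exp (-(x ^ 2) / 2) := by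
    rw [rayleighDens, if_pos hx]
    norm_num
  have h1 : C * (μ * Real.sqrt (π / b)) = Real.sqrt (1 - v) * rayleighDens 1 x := by
    rw [hray, hsq, hC_def, hμ_def]
    field_simp
  have h2 : C * (Real.exp (-b * μ ^ 2) / (2 * b)) ≤ Real.sqrt v * Real.exp (-(x ^ 2) / (2 * v)) := by
    have hexp2 : Real.exp (-(x ^ 2) / 2) * Real.exp (-b * μ ^ 2) = Real.exp (-(x ^ 2) / (2 * v)) := by
      rw [← Real.exp_add]
      congr 1
      rw [hb_def, hμ_def]
      field_simp
      ring
    have hval : C * (Real.exp (-b * μ ^ 2) / (2 * b))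
        = v / Real.sqrt (2 * π * v) * Real.exp (-(x ^ 2) / (2 * v)) := by
      have h2b : (2 * b)⁻¹ = v * (1 - v) := by rw [hb_def]; rw [mul_inv, inv_inv]; field_simp
      rw [hC_def, div_eq_mul_inv (Real.exp (-b * μ ^ 2)), h2b, ← hexp2]
      field_simp
    rw [hval]
    have hvs : v / Real.sqrt (2 * π * v) ≤ Real.sqrt v := by
      have hsplit : Real.sqrt (2 * π * v) = Real.sqrt (2 * π) * Real.sqrt v := by
        rw [← Real.sqrt_mul (by positivity)]
      have hver : v = Real.sqrt v * Real.sqrt v := (Real.mul_self_sqrt hv.le).symm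
      have h2pi : 1 ≤ Real.sqrt (2 * π) := by
        rw [show (1:ℝ) = Real.sqrt 1 by simp]
        exact Real.sqrt_le_sqrt (by nlinarith [Real.pi_gt_three])
      have hsv : 0 < Real.sqrt v := Real.sqrt_pos.2 hv
      rw [hsplit, div_le_iff₀ (by positivity)]
      nlinarith [hver, h2pi, hsv.le, mul_nonneg hsv.le hsv.le]
    exact mul_le_mul_of_nonneg_right hvs (Real.exp_pos _).le
  obtain ⟨hJl, hJu⟩ := J_bounds b μ hb hμ
  constructor
  · rw [hrw, ← h1]
    exact mul_le_mul_of_nonneg_left hJl hC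
  · rw [hrw]
    have := mul_le_mul_of_nonneg_left hJu hC
    rw [mul_add] at this
    linarith
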